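/- Let Q = ([0,1],&,1) with & a continuous t-norm and let A be a D(Q)-category. Every weight φ on A generated by a forward Cauchy net in A is flat; consequently every flat complete D(Q)-category is Yoneda complete. -/
import Mathlib


noncomputable def tres (f : ℝ → ℝ → ℝ) (x y : ℝ) : ℝ :=
  sSup {z | z ∈ Set.Icc (0:ℝ) 1 ∧ f x z ≤ y}

def IsContTNorm (f : ℝ → ℝ → ℝ) : Prop :=
  (∀ a ∈ Set.Icc (0:ℝ) 1, ∀ b ∈ Set.Icc (0:ℝ) 1, f a b ∈ Set.Icc (0:ℝ) 1) ∧
  ContinuousOn (fun p : ℝ × ℝ => f p.1 p.2) (Set.Icc 0 1 ×ˢ Set.Icc 0 1) ∧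
  (∀ a ∈ Set.Icc (0:ℝ) 1, ∀ b ∈ Set.Icc (0:ℝ) 1, f a b = f b a) ∧
  (∀ a ∈ Set.Icc (0:ℝ) 1, ∀ b ∈ Set.Icc (0:ℝ) 1, ∀ c ∈ Set.Icc (0:ℝ) 1,
    f (f a b) c = f a (f b c)) ∧
  (∀ a ∈ Set.Icc (0:ℝ) 1, ∀ b ∈ Set.Icc (0:ℝ) 1, ∀ c ∈ Set.Icc (0:ℝ) 1,
    a ≤ b → f a c ≤ f b c) ∧
  (∀ a ∈ Set.Icc (0:ℝ) 1, f a 1 = a)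

/-- A D(Q)-category (ordered fuzzy set) valued in `([0,1], f, 1)`. -/
def IsDCat {α : Type*} (f : ℝ → ℝ → ℝ) (A : α → α → ℝ) : Prop :=
  (∀ x y, A x y ∈ Set.Icc (0:ℝ) 1) ∧
  (∀ x y, A x y ≤ min (A x x) (A y y)) ∧
  (∀ x y z, f (tres f (A y y) (A y z)) (A x y) ≤ A x z)

/-- A net is forward Cauchy if `lim_{ν ≥ μ} A(x_μ, x_ν)` exists. -/
def FwdCauchy {α : Type*} {Λ : Type*} [Preorder Λ] (A : α → α → ℝ) (x : Λ → α) : Prop :=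
  ∃ L : ℝ, Filter.Tendsto (fun q : Λ × Λ => A (x q.1) (x q.2))
    (Filter.atTop ⊓ Filter.principal {q : Λ × Λ | q.1 ≤ q.2}) (nhds L)

/-- A net is biCauchy if `lim_{μ,ν} A(x_μ, x_ν)` exists. -/
def BiCauchy {α : Type*} {Λ : Type*} [Preorder Λ] (A : α → α → ℝ) (x : Λ → α) : Prop :=
  ∃ L : ℝ, Filter.Tendsto (fun q : Λ × Λ => A (x q.1) (x q.2)) Filter.atTop (nhds L)

/-- The type `⋁_λ ⋀_{μ ≥ λ} A(x_μ, x_μ)` of a net. -/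
noncomputable def genType {α : Type*} {Λ : Type*} [Preorder Λ]
    (A : α → α → ℝ) (x : Λ → α) : ℝ :=
  ⨆ l : Λ, ⨅ σ : {σ : Λ // l ≤ σ}, A (x σ.1) (x σ.1)

/-- The weight `⋁_λ ⋀_{μ ≥ λ} A(−, x_μ)` generated by a net. -/
noncomputable def genWeight {α : Type*} {Λ : Type*} [Preorder Λ]
    (A : α → α → ℝ) (x : Λ → α) : α → ℝ :=
  fun u => ⨆ l : Λ, ⨅ σ : {σ : Λ // l ≤ σ}, A u (x σ.1)

/-- The coweight `⋁_λ ⋀_{μ ≥ λ} A(x_μ, −)` generated by a net. -/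
noncomputable def genCoweight {α : Type*} {Λ : Type*} [Preorder Λ]
    (A : α → α → ℝ) (x : Λ → α) : α → ℝ :=
  fun v => ⨆ l : Λ, ⨅ σ : {σ : Λ // l ≤ σ}, A (x σ.1) v

/-- `s` is a Yoneda limit of the net `x`. -/
noncomputable def YonedaLim {α : Type*} {Λ : Type*} [Preorder Λ]
    (A : α → α → ℝ) (x : Λ → α) (s : α) : Prop :=
  A s s = genType A x ∧ ∀ y, A s y = genCoweight A x y

/-- A weight of type `tφ` on a D(Q)-category. -/
noncomputable def IsWeight {α : Type*} (f : ℝ → ℝ → ℝ) (A : α → α → ℝ)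
    (tφ : ℝ) (φ : α → ℝ) : Prop :=
  (∀ u, 0 ≤ φ u ∧ φ u ≤ min tφ (A u u)) ∧
  ∀ u v, f (tres f (A v v) (φ v)) (A u v) ≤ φ u

/-- A coweight of type `b` on a D(Q)-category. -/
noncomputable def IsCoweight {α : Type*} (f : ℝ → ℝ → ℝ) (A : α → α → ℝ)
    (b : ℝ) (ψ : α → ℝ) : Prop :=
  (∀ u, 0 ≤ ψ u ∧ ψ u ≤ min b (A u u)) ∧
  ∀ u v, f (tres f (A u u) (A u v)) (ψ u) ≤ ψ v

/-- Composition `φ ∘ ψ = ⋁_u (A(u,u) → φ(u)) & ψ(u)` of a weight after a coweight. -/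
noncomputable def compWC {α : Type*} (f : ℝ → ℝ → ℝ) (A : α → α → ℝ)
    (φ ψ : α → ℝ) : ℝ :=
  ⨆ u : α, f (tres f (A u u) (φ u)) (ψ u)

/-- A weight `φ` of type `tφ` is flat: `φ ∘ (−)` preserves the top coweight of each
type and binary meets of coweights of equal type. -/
noncomputable def IsFlat {α : Type*} (f : ℝ → ℝ → ℝ) (A : α → α → ℝ)
    (tφ : ℝ) (φ : α → ℝ) : Prop :=
  ∀ b ∈ Set.Icc (0:ℝ) 1,
    compWC f A φ (fun u => min b (A u u)) = min b tφ ∧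
    ∀ ψ₁ ψ₂ : α → ℝ, IsCoweight f A b ψ₁ → IsCoweight f A b ψ₂ →
      compWC f A φ (fun u => min (ψ₁ u) (ψ₂ u)) = min (compWC f A φ ψ₁) (compWC f A φ ψ₂)

/-- `s` is a supremum of the weight `φ` of type `tφ`. -/
noncomputable def IsSupremum {α : Type*} (f : ℝ → ℝ → ℝ) (A : α → α → ℝ)
    (tφ : ℝ) (φ : α → ℝ) (s : α) : Prop :=
  A s s = tφ ∧ ∀ y, A s y = min (A y y) (⨅ u : α, f (tres f (φ u) (A u y)) tφ)


open Filter Set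

namespace S12

variable {f : ℝ → ℝ → ℝ}

local notation "I01" => Set.Icc (0:ℝ) 1

lemma mem0 : (0:ℝ) ∈ I01 := ⟨le_refl 0, zero_le_one⟩
lemma mem1 : (1:ℝ) ∈ I01 := ⟨zero_le_one, le_refl 1⟩

lemma tmem (ht : IsContTNorm f) {a b : ℝ} (ha : a ∈ I01) (hb : b ∈ I01) : f a b ∈ I01 :=
  ht.1 a ha b hb
lemma tcomm (ht : IsContTNorm f) {a b : ℝ} (ha : a ∈ I01) (hb : b ∈ I01) : f a b = f b a :=
  ht.2.2.1 a ha b hb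
lemma tassoc (ht : IsContTNorm f) {a b c : ℝ} (ha : a ∈ I01) (hb : b ∈ I01) (hc : c ∈ I01) :
    f (f a b) c = f a (f b c) := ht.2.2.2.1 a ha b hb c hc
lemma tmono1 (ht : IsContTNorm f) {a b c : ℝ} (ha : a ∈ I01) (hb : b ∈ I01) (hc : c ∈ I01)
    (h : a ≤ b) : f a c ≤ f b c := ht.2.2.2.2.1 a ha b hb c hc h
lemma tunit (ht : IsContTNorm f) {a : ℝ} (ha : a ∈ I01) : f a 1 = a := ht.2.2.2.2.2 a ha

lemma tmono2 (ht : IsContTNorm f) {a b c : ℝ} (ha : a ∈ I01) (hb : b ∈ I01) (hc : c ∈ I01)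
    (h : b ≤ c) : f a b ≤ f a c := by
  rw [tcomm ht ha hb, tcomm ht ha hc]; exact tmono1 ht hb hc ha h

lemma tzero (ht : IsContTNorm f) {a : ℝ} (ha : a ∈ I01) : f a 0 = 0 := by
  have h1 : f a 0 ≤ f 1 0 := tmono1 ht ha mem1 mem0 ha.2
  have h2 : f 1 0 = 0 := by rw [tcomm ht mem1 mem0, tunit ht mem0]
  have h3 := (tmem ht ha mem0).1
  linarith

lemma tle_left (ht : IsContTNorm f) {a b : ℝ} (ha : a ∈ I01) (hb : b ∈ I01) : f a b ≤ a := by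
  have := tmono2 ht ha hb mem1 hb.2
  rwa [tunit ht ha] at this

lemma tle_right (ht : IsContTNorm f) {a b : ℝ} (ha : a ∈ I01) (hb : b ∈ I01) : f a b ≤ b := by
  rw [tcomm ht ha hb]; exact tle_left ht hb ha

lemma tle_min (ht : IsContTNorm f) {a b : ℝ} (ha : a ∈ I01) (hb : b ∈ I01) :
    f a b ≤ min a b := le_min (tle_left ht ha hb) (tle_right ht ha hb)

/-- continuity of `f a ·` on `[0,1]`. -/
lemma tcont2 (ht : IsContTNorm f) {a : ℝ} (ha : a ∈ I01) :
    ContinuousOn (fun z => f a z) I01 := by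
  have : (fun z => f a z) = (fun p : ℝ × ℝ => f p.1 p.2) ∘ (fun z => (a, z)) := rfl
  rw [this]
  exact ht.2.1.comp ((continuous_const.prodMk continuous_id).continuousOn)
    (fun z hz => ⟨ha, hz⟩)

/-- `f` preserves limits of sequences/nets with values in `[0,1]`. -/
lemma ttendsto (ht : IsContTNorm f) {ι : Type*} {l : Filter ι} {u v : ι → ℝ} {a b : ℝ}
    (hu : Tendsto u l (nhds a)) (hv : Tendsto v l (nhds b))
    (hu' : ∀ i, u i ∈ I01) (hv' : ∀ i, v i ∈ I01) (ha : a ∈ I01) (hb : b ∈ I01) :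
    Tendsto (fun i => f (u i) (v i)) l (nhds (f a b)) := by
  have hmem : (a, b) ∈ I01 ×ˢ I01 := ⟨ha, hb⟩
  have hc : ContinuousWithinAt (fun p : ℝ × ℝ => f p.1 p.2) (I01 ×ˢ I01) (a, b) :=
    ht.2.1 _ hmem
  have hp : Tendsto (fun i => (u i, v i)) l (nhdsWithin (a, b) (I01 ×ˢ I01)) := by
    rw [tendsto_nhdsWithin_iff]
    exact ⟨hu.prodMk_nhds hv, Filter.Eventually.of_forall fun i => ⟨hu' i, hv' i⟩⟩
  exact hc.tendsto.comp hp

section Tres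
variable (ht : IsContTNorm f)

lemma tres_set_mem0 (ht : IsContTNorm f) {a b : ℝ} (ha : a ∈ I01) (hb : 0 ≤ b) :
    (0:ℝ) ∈ {z | z ∈ I01 ∧ f a z ≤ b} := ⟨mem0, by rw [tzero ht ha]; exact hb⟩

lemma tres_set_bdd {a b : ℝ} : BddAbove {z | z ∈ I01 ∧ f a z ≤ b} :=
  ⟨1, fun z hz => hz.1.2⟩

lemma tres_mem (ht : IsContTNorm f) {a b : ℝ} (ha : a ∈ I01) (hb : 0 ≤ b) :
    tres f a b ∈ I01 := by
  constructor
  · exact le_csSup tres_set_bdd (tres_set_mem0 ht ha hb)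
  · exact csSup_le ⟨0, tres_set_mem0 ht ha hb⟩ (fun z hz => hz.1.2)

lemma tres_adj (ht : IsContTNorm f) {a b c : ℝ} (hc : c ∈ I01) (h : f a c ≤ b) :
    c ≤ tres f a b := le_csSup tres_set_bdd ⟨hc, h⟩

lemma f_tres_le (ht : IsContTNorm f) {a b : ℝ} (ha : a ∈ I01) (hb : 0 ≤ b) :
    f a (tres f a b) ≤ b := by
  have hclosed : IsClosed {z | z ∈ I01 ∧ f a z ≤ b} := by
    have : {z | z ∈ I01 ∧ f a z ≤ b} = I01 ∩ (fun z => f a z) ⁻¹' (Set.Iic b) := rfl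
    rw [this]
    exact (tcont2 ht ha).preimage_isClosed_of_isClosed isClosed_Icc isClosed_Iic
  have hcpt : IsCompact {z | z ∈ I01 ∧ f a z ≤ b} :=
    IsCompact.of_isClosed_subset isCompact_Icc hclosed (fun z hz => hz.1)
  have := hcpt.sSup_mem ⟨0, tres_set_mem0 ht ha hb⟩
  exact this.2

lemma tres_ge_self (ht : IsContTNorm f) {a b : ℝ} (ha : a ∈ I01) (hb : b ∈ I01) :
    b ≤ tres f a b := tres_adj ht hb (tle_right ht ha hb)

/-- divisibility of continuous t-norms -/
lemma tdiv (ht : IsContTNorm f) {a b : ℝ} (ha : a ∈ I01) (hb : b ∈ I01) :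
    f a (tres f a b) = min a b := by
  rcases le_total b a with h | h
  · rw [min_eq_right h]
    refine le_antisymm (f_tres_le ht ha hb.1) ?_
    have hIVT := intermediate_value_Icc (zero_le_one) (tcont2 ht ha)
    have hb' : b ∈ Set.Icc (f a 0) (f a 1) := by
      rw [tzero ht ha, tunit ht ha]; exact ⟨hb.1, h⟩
    obtain ⟨z, hz, hfz⟩ := hIVT hb'
    calc b = f a z := hfz.symm
    _ ≤ f a (tres f a b) :=
        tmono2 ht ha hz (tres_mem ht ha hb.1) (tres_adj ht hz hfz.le)
  · rw [min_eq_left h]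
    have h1 : (1:ℝ) ≤ tres f a b := by
      refine tres_adj ht mem1 ?_; rw [tunit ht ha]; exact h
    have h2 : tres f a b = 1 := le_antisymm (tres_mem ht ha hb.1).2 h1
    rw [h2, tunit ht ha]

/-- the key rewriting identity -/
lemma tchain (ht : IsContTNorm f) {a p m : ℝ} (ha : a ∈ I01) (hp : p ∈ I01) (hm : m ∈ I01)
    (hpa : p ≤ a) (hma : m ≤ a) :
    f (tres f a p) m = f p (tres f a m) := by
  have hrp := tres_mem ht ha hp.1
  have hrm := tres_mem ht ha hm.1
  have hdm : f a (tres f a m) = m := by rw [tdiv ht ha hm, min_eq_right hma]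
  have hdp : f a (tres f a p) = min a p := tdiv ht ha hp
  calc f (tres f a p) m = f (tres f a p) (f a (tres f a m)) := by rw [hdm]
  _ = f (f (tres f a p) a) (tres f a m) := (tassoc ht hrp ha hrm).symm
  _ = f (f a (tres f a p)) (tres f a m) := by rw [tcomm ht hrp ha]
  _ = f (min a p) (tres f a m) := by rw [hdp]
  _ = f p (tres f a m) := by rw [min_eq_right hpa]

end Tres

/-- key algebraic lemma: if `f a r = a` then `r` acts as a unit below `a`. -/
lemma tunit_below (ht : IsContTNorm f) {a r c : ℝ} (ha : a ∈ I01) (hr : r ∈ I01) (hc : c ∈ I01)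
    (h : f a r = a) (hca : c ≤ a) : f r c = c := by
  -- iterated squares of r
  set w : ℕ → ℝ := fun n => Nat.rec r (fun _ t => f t t) n with hw
  have hw0 : w 0 = r := rfl
  have hwsucc : ∀ n, w (n + 1) = f (w n) (w n) := fun n => rfl
  have hwI : ∀ n, w n ∈ I01 := by
    intro n; induction n with
    | zero => exact hr
    | succ n ih => rw [hwsucc]; exact tmem ht ih ih
  have hwa : ∀ n, f a (w n) = a := by
    intro n; induction n with
    | zero => exact h
    | succ n ih =>
      rw [hwsucc, ← tassoc ht ha (hwI n) (hwI n), ih, ih]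
  have hanti : Antitone w := antitone_nat_of_succ_le (fun n => by
    rw [hwsucc]; exact tle_left ht (hwI n) (hwI n))
  have hbdd : BddBelow (Set.range w) := ⟨0, fun z ⟨n, hn⟩ => hn ▸ (hwI n).1⟩
  have htend : Tendsto w atTop (nhds (⨅ n, w n)) := tendsto_atTop_ciInf hanti hbdd
  set rs := ⨅ n, w n with hrs
  have hrsI : rs ∈ I01 := by
    constructor
    · exact le_ciInf (fun n => (hwI n).1)
    · exact le_trans (ciInf_le hbdd 0) (hwI 0).2
  have hars : f a rs = a := by
    have h1 : Tendsto (fun n => f a (w n)) atTop (nhds (f a rs)) :=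
      ttendsto ht tendsto_const_nhds htend (fun _ => ha) hwI ha hrsI
    have h2 : Tendsto (fun n => f a (w n)) atTop (nhds a) := by
      simp only [hwa]; exact tendsto_const_nhds
    exact tendsto_nhds_unique h1 h2
  have hidem : f rs rs = rs := by
    have h1 : Tendsto (fun n => f (w n) (w n)) atTop (nhds (f rs rs)) :=
      ttendsto ht htend htend hwI hwI hrsI hrsI
    have h2 : Tendsto (fun n => w (n + 1)) atTop (nhds rs) :=
      htend.comp (Filter.tendsto_add_atTop_nat 1)
    have h3 : Tendsto (fun n => f (w n) (w n)) atTop (nhds rs) := by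
      simpa only [← hwsucc] using h2
    exact tendsto_nhds_unique h1 h3
  have hars' : a ≤ rs := by
    rw [← hars]; exact tle_right ht ha hrsI
  -- idempotents act as min below themselves
  have hrsc : f rs c = c := by
    have hIVT := intermediate_value_Icc (zero_le_one) (tcont2 ht hrsI)
    have hcmem : c ∈ Set.Icc (f rs 0) (f rs 1) := by
      rw [tzero ht hrsI, tunit ht hrsI]; exact ⟨hc.1, le_trans hca hars'⟩
    obtain ⟨z, hz, hfz⟩ := hIVT hcmem
    have hfz' : f rs z = c := hfz
    calc f rs c = f rs (f rs z) := by rw [hfz']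
    _ = f (f rs rs) z := (tassoc ht hrsI hrsI hz).symm
    _ = f rs z := by rw [hidem]
    _ = c := hfz'
  have hrsr : rs ≤ r := le_trans (ciInf_le hbdd 0) (le_of_eq hw0)
  refine le_antisymm (tle_right ht hr hc) ?_
  calc c = f rs c := hrsc.symm
  _ ≤ f r c := tmono1 ht hrsI hr hc hrsr

/-- uniform almost-unit lemma -/
lemma tunif (ht : IsContTNorm f) {ε : ℝ} (hε : 0 < ε) :
    ∃ δ > (0:ℝ), ∀ a ∈ I01, ∀ r ∈ I01, ∀ c ∈ I01,
      c ≤ a → a - δ ≤ f a r → c - ε ≤ f r c := by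
  by_contra hcon
  push_neg at hcon
  -- for each n pick a counterexample with δ = 1/(n+1)
  have hpick : ∀ n : ℕ, ∃ a ∈ I01, ∃ r ∈ I01, ∃ c ∈ I01,
      c ≤ a ∧ a - 1/(n+1) ≤ f a r ∧ f r c < c - ε := by
    intro n
    obtain ⟨a, ha, r, hr, c, hc, h1, h2, h3⟩ :=
      hcon (1/(n+1)) (by positivity)
    exact ⟨a, ha, r, hr, c, hc, h1, h2, h3⟩
  choose a ha r hr c hc hle hfar hfrc using hpick
  -- extract a convergent subsequence of the triples
  have hcpt : IsCompact (I01 ×ˢ (I01 ×ˢ I01) : Set (ℝ × ℝ × ℝ)) :=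
    isCompact_Icc.prod (isCompact_Icc.prod isCompact_Icc)
  have hmem : ∀ n, (a n, r n, c n) ∈ (I01 ×ˢ (I01 ×ˢ I01) : Set (ℝ × ℝ × ℝ)) :=
    fun n => ⟨ha n, hr n, hc n⟩
  obtain ⟨⟨a₀, r₀, c₀⟩, hlim_mem, φ, hφ, hφtend⟩ := hcpt.tendsto_subseq hmem
  obtain ⟨ha₀, hr₀, hc₀⟩ := hlim_mem
  have hta : Tendsto (fun k => a (φ k)) atTop (nhds a₀) :=
    (continuous_fst.tendsto _).comp hφtend
  have htr : Tendsto (fun k => r (φ k)) atTop (nhds r₀) :=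
    ((continuous_fst.tendsto _).comp ((continuous_snd.tendsto _).comp hφtend))
  have htc : Tendsto (fun k => c (φ k)) atTop (nhds c₀) :=
    ((continuous_snd.tendsto _).comp ((continuous_snd.tendsto _).comp hφtend))
  have hca : c₀ ≤ a₀ := le_of_tendsto_of_tendsto' htc hta (fun k => hle (φ k))
  have htf : Tendsto (fun k => f (a (φ k)) (r (φ k))) atTop (nhds (f a₀ r₀)) :=
    ttendsto ht hta htr (fun k => ha (φ k)) (fun k => hr (φ k)) ha₀ hr₀
  have hfa : f a₀ r₀ = a₀ := by
    refine le_antisymm (le_of_tendsto_of_tendsto' htf hta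
      (fun k => tle_left ht (ha (φ k)) (hr (φ k)))) ?_
    have hlow : Tendsto (fun k => a (φ k) - 1/(φ k + 1)) atTop (nhds (a₀ - 0)) := by
      refine hta.sub ?_
      have h1 : Tendsto (fun n : ℕ => 1/((n:ℝ) + 1)) atTop (nhds 0) :=
        tendsto_one_div_add_atTop_nhds_zero_nat
      exact h1.comp hφ.tendsto_atTop
    rw [sub_zero] at hlow
    exact le_of_tendsto_of_tendsto' hlow htf (fun k => hfar (φ k))
  have htf2 : Tendsto (fun k => f (r (φ k)) (c (φ k))) atTop (nhds (f r₀ c₀)) :=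
    ttendsto ht htr htc (fun k => hr (φ k)) (fun k => hc (φ k)) hr₀ hc₀
  have hub : f r₀ c₀ ≤ c₀ - ε :=
    le_of_tendsto_of_tendsto' htf2 (htc.sub tendsto_const_nhds)
      (fun k => (hfrc (φ k)).le)
  have := tunit_below ht ha₀ hr₀ hc₀ hfa hca
  linarith

section Nets
variable {Λ : Type} [SemilatticeSup Λ] [Nonempty Λ]

/-- the liminf `⨆_l ⨅_{σ ≥ l} g σ` of a convergent net equals its limit. -/
lemma liminf_eq_of_tendsto {g : Λ → ℝ} {c : ℝ} (hb : ∀ l, g l ∈ I01)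
    (h : Tendsto g atTop (nhds c)) :
    (⨆ l : Λ, ⨅ σ : {σ : Λ // l ≤ σ}, g σ.1) = c := by
  have hinfbdd : ∀ l : Λ, BddBelow (Set.range (fun σ : {σ : Λ // l ≤ σ} => g σ.1)) :=
    fun l => ⟨0, fun z ⟨σ, hσ⟩ => hσ ▸ (hb σ.1).1⟩
  have hne : ∀ l : Λ, Nonempty {σ : Λ // l ≤ σ} := fun l => ⟨⟨l, le_refl l⟩⟩
  have hinfI : ∀ l : Λ, (⨅ σ : {σ : Λ // l ≤ σ}, g σ.1) ∈ I01 := by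
    intro l
    haveI := hne l
    constructor
    · exact le_ciInf (fun σ => (hb σ.1).1)
    · exact le_trans (ciInf_le (hinfbdd l) ⟨l, le_refl l⟩) (hb l).2
  have hsupbdd : BddAbove (Set.range (fun l : Λ => ⨅ σ : {σ : Λ // l ≤ σ}, g σ.1)) :=
    ⟨1, fun z ⟨l, hl⟩ => hl ▸ (hinfI l).2⟩
  have key : ∀ ε > (0:ℝ), c - ε ≤ (⨆ l : Λ, ⨅ σ : {σ : Λ // l ≤ σ}, g σ.1) ∧
      (⨆ l : Λ, ⨅ σ : {σ : Λ // l ≤ σ}, g σ.1) ≤ c + ε := by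
    intro ε hε
    obtain ⟨l₀, hl₀⟩ := (Metric.tendsto_atTop.mp h) ε hε
    constructor
    · refine le_trans ?_ (le_ciSup hsupbdd l₀)
      haveI := hne l₀
      refine le_ciInf (fun σ => ?_)
      have := hl₀ σ.1 σ.2
      rw [Real.dist_eq, abs_lt] at this
      linarith
    · haveI := hne (Classical.arbitrary Λ)
      refine ciSup_le (fun l => ?_)
      refine le_trans (ciInf_le (hinfbdd l) ⟨l ⊔ l₀, le_sup_left⟩) ?_
      have := hl₀ (l ⊔ l₀) le_sup_right
      rw [Real.dist_eq, abs_lt] at this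
      linarith
  have h1 : ∀ ε > (0:ℝ), |(⨆ l : Λ, ⨅ σ : {σ : Λ // l ≤ σ}, g σ.1) - c| ≤ ε := by
    intro ε hε
    obtain ⟨k1, k2⟩ := key ε hε
    rw [abs_le]; constructor <;> linarith
  refine eq_of_forall_dist_le (fun ε hε => ?_)
  rw [Real.dist_eq]
  exact h1 ε hε

/-- an almost-increasing net in `[0,1]` converges. -/
lemma conv_of_almost_mono {g : Λ → ℝ} (hb : ∀ l, g l ∈ I01)
    (hai : ∀ ε > (0:ℝ), ∃ l₀ : Λ, ∀ μ ν : Λ, l₀ ≤ μ → μ ≤ ν → g μ - ε ≤ g ν) :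
    ∃ c ∈ I01, Tendsto g atTop (nhds c) := by
  have hinfbdd : ∀ l : Λ, BddBelow (Set.range (fun σ : {σ : Λ // l ≤ σ} => g σ.1)) :=
    fun l => ⟨0, fun z ⟨σ, hσ⟩ => hσ ▸ (hb σ.1).1⟩
  have hne : ∀ l : Λ, Nonempty {σ : Λ // l ≤ σ} := fun l => ⟨⟨l, le_refl l⟩⟩
  have hinfI : ∀ l : Λ, (⨅ σ : {σ : Λ // l ≤ σ}, g σ.1) ∈ I01 := by
    intro l
    haveI := hne l
    exact ⟨le_ciInf (fun σ => (hb σ.1).1),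
      le_trans (ciInf_le (hinfbdd l) ⟨l, le_refl l⟩) (hb l).2⟩
  have hsupbdd : BddAbove (Set.range (fun l : Λ => ⨅ σ : {σ : Λ // l ≤ σ}, g σ.1)) :=
    ⟨1, fun z ⟨l, hl⟩ => hl ▸ (hinfI l).2⟩
  set c := ⨆ l : Λ, ⨅ σ : {σ : Λ // l ≤ σ}, g σ.1 with hc
  have hcI : c ∈ I01 := by
    constructor
    · exact le_trans (hinfI (Classical.arbitrary Λ)).1 (le_ciSup hsupbdd _)
    · exact ciSup_le (fun l => (hinfI l).2)
  refine ⟨c, hcI, Metric.tendsto_atTop.mpr ?_⟩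
  intro ε hε
  obtain ⟨l₀, hl₀⟩ := hai (ε/4) (by linarith)
  -- some tail-infimum is close to c from below
  have h2 : ∃ l₁ : Λ, c - ε/4 < ⨅ σ : {σ : Λ // l₁ ≤ σ}, g σ.1 := by
    have : c - ε/4 < c := by linarith
    exact exists_lt_of_lt_ciSup this
  obtain ⟨l₁, hl₁⟩ := h2
  refine ⟨l₀ ⊔ l₁, fun σ hσ => ?_⟩
  have hσ₀ : l₀ ≤ σ := le_trans le_sup_left hσ
  have hσ₁ : l₁ ≤ σ := le_trans le_sup_right hσ
  -- lower bound : g σ ≥ inf over tail of l₁ > c - ε/4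
  have hlow : c - ε/4 < g σ :=
    lt_of_lt_of_le hl₁ (ciInf_le (hinfbdd l₁) ⟨σ, hσ₁⟩)
  -- upper bound : g σ ≤ inf over tail of σ + ε/4 ≤ c + ε/4
  have hup : g σ ≤ c + ε/4 := by
    have h3 : g σ - ε/4 ≤ ⨅ τ : {τ : Λ // σ ≤ τ}, g τ.1 := by
      haveI := hne σ
      exact le_ciInf (fun τ => hl₀ σ τ.1 hσ₀ τ.2)
    have h4 : (⨅ τ : {τ : Λ // σ ≤ τ}, g τ.1) ≤ c := le_ciSup hsupbdd σ
    linarith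
  rw [Real.dist_eq, abs_lt]
  constructor <;> linarith

/-- an almost-decreasing net in `[0,1]` converges. -/
lemma conv_of_almost_anti {g : Λ → ℝ} (hb : ∀ l, g l ∈ I01)
    (hai : ∀ ε > (0:ℝ), ∃ l₀ : Λ, ∀ μ ν : Λ, l₀ ≤ μ → μ ≤ ν → g ν ≤ g μ + ε) :
    ∃ c ∈ I01, Tendsto g atTop (nhds c) := by
  have hb' : ∀ l, (1 - g l) ∈ I01 := fun l => ⟨by linarith [(hb l).2], by linarith [(hb l).1]⟩
  obtain ⟨c, hcI, hct⟩ := conv_of_almost_mono hb' (by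
    intro ε hε
    obtain ⟨l₀, hl₀⟩ := hai ε hε
    exact ⟨l₀, fun μ ν h1 h2 => by linarith [hl₀ μ ν h1 h2]⟩)
  refine ⟨1 - c, ⟨by linarith [hcI.2], by linarith [hcI.1]⟩, ?_⟩
  have := (tendsto_const_nhds (x := (1:ℝ)) (f := (atTop : Filter Λ))).sub hct
  simpa using this

end Nets

section Cauchy
variable {Λ : Type} [SemilatticeSup Λ] [Nonempty Λ]

lemma cauchy_eps {α : Type} {A : α → α → ℝ} {x : Λ → α} {L : ℝ}
    (hL : Tendsto (fun q : Λ × Λ => A (x q.1) (x q.2))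
      (atTop ⊓ Filter.principal {q : Λ × Λ | q.1 ≤ q.2}) (nhds L)) :
    ∀ ε > (0:ℝ), ∃ l₀ : Λ, ∀ μ ν : Λ, l₀ ≤ μ → μ ≤ ν → |A (x μ) (x ν) - L| < ε := by
  intro ε hε
  have h1 := Metric.tendsto_nhds.mp hL ε hε
  rw [Filter.eventually_inf_principal] at h1
  rw [Filter.eventually_atTop] at h1
  obtain ⟨a, ha⟩ := h1
  refine ⟨a.1 ⊔ a.2, fun μ ν h1 h2 => ?_⟩
  have := ha (μ, ν) ⟨le_trans le_sup_left h1, le_trans le_sup_right (le_trans h1 h2)⟩ h2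
  rwa [Real.dist_eq] at this

/-- pick a sequence along which three convergent nets still converge -/
lemma pick_seq {g₁ g₂ g₃ : Λ → ℝ} {c₁ c₂ c₃ : ℝ}
    (h₁ : Tendsto g₁ atTop (nhds c₁)) (h₂ : Tendsto g₂ atTop (nhds c₂))
    (h₃ : Tendsto g₃ atTop (nhds c₃)) :
    ∃ ν : ℕ → Λ, Tendsto (fun n => g₁ (ν n)) atTop (nhds c₁) ∧
      Tendsto (fun n => g₂ (ν n)) atTop (nhds c₂) ∧
      Tendsto (fun n => g₃ (ν n)) atTop (nhds c₃) := by
  have hev : ∀ n : ℕ, ∃ l : Λ, dist (g₁ l) c₁ ≤ 1/(n+1) ∧ dist (g₂ l) c₂ ≤ 1/(n+1) ∧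
      dist (g₃ l) c₃ ≤ 1/(n+1) := by
    intro n
    have e1 := Metric.tendsto_nhds.mp h₁ (1/(n+1)) (by positivity)
    have e2 := Metric.tendsto_nhds.mp h₂ (1/(n+1)) (by positivity)
    have e3 := Metric.tendsto_nhds.mp h₃ (1/(n+1)) (by positivity)
    exact ((e1.and (e2.and e3)).mono
      (fun l hl => ⟨hl.1.le, hl.2.1.le, hl.2.2.le⟩)).exists
  choose ν hν1 hν2 hν3 using hev
  have hz : Tendsto (fun n : ℕ => 1/((n:ℝ)+1)) atTop (nhds 0) :=
    tendsto_one_div_add_atTop_nhds_zero_nat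
  refine ⟨ν, ?_, ?_, ?_⟩ <;> rw [tendsto_iff_dist_tendsto_zero]
  · exact squeeze_zero (fun n => dist_nonneg) hν1 hz
  · exact squeeze_zero (fun n => dist_nonneg) hν2 hz
  · exact squeeze_zero (fun n => dist_nonneg) hν3 hz

end Cauchy

section Main
variable {α : Type} {A : α → α → ℝ} {Λ : Type} [SemilatticeSup Λ] [Nonempty Λ]
  {x : Λ → α} {L : ℝ}

lemma diag_tendsto
    (hC : ∀ ε > (0:ℝ), ∃ l₀ : Λ, ∀ μ ν : Λ, l₀ ≤ μ → μ ≤ ν → |A (x μ) (x ν) - L| < ε) :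
    Tendsto (fun l => A (x l) (x l)) atTop (nhds L) := by
  rw [Metric.tendsto_atTop]
  intro ε hε
  obtain ⟨l₀, hl₀⟩ := hC ε hε
  exact ⟨l₀, fun σ hσ => by rw [Real.dist_eq]; exact hl₀ σ σ hσ (le_refl σ)⟩

lemma L_mem (hA : IsDCat f A)
    (hC : ∀ ε > (0:ℝ), ∃ l₀ : Λ, ∀ μ ν : Λ, l₀ ≤ μ → μ ≤ ν → |A (x μ) (x ν) - L| < ε) :
    L ∈ I01 :=
  isClosed_Icc.mem_of_tendsto (diag_tendsto hC)
    (Filter.Eventually.of_forall (fun l => hA.1 (x l) (x l)))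

/-- coweight-like functions converge along the net -/
lemma coweight_conv (ht : IsContTNorm f) (hA : IsDCat f A)
    (hC : ∀ ε > (0:ℝ), ∃ l₀ : Λ, ∀ μ ν : Λ, l₀ ≤ μ → μ ≤ ν → |A (x μ) (x ν) - L| < ε)
    {ψ : α → ℝ} (hψI : ∀ u, ψ u ∈ I01) (hψle : ∀ u, ψ u ≤ A u u)
    (hax : ∀ u v, f (tres f (A u u) (A u v)) (ψ u) ≤ ψ v) :
    ∃ c ∈ I01, Tendsto (fun l => ψ (x l)) atTop (nhds c) := by
  refine conv_of_almost_mono (fun l => hψI (x l)) ?_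
  intro ε hε
  obtain ⟨δ, hδ, hδ'⟩ := tunif ht hε
  obtain ⟨l₁, hl₁⟩ := hC (δ/2) (by linarith)
  refine ⟨l₁, fun μ ν h1 h2 => ?_⟩
  set a := A (x μ) (x μ) with ha'
  have haI : a ∈ I01 := hA.1 _ _
  set m := A (x μ) (x ν) with hm'
  have hmI : m ∈ I01 := hA.1 _ _
  have hma : m ≤ a := le_trans (hA.2.1 _ _) (min_le_left _ _)
  have h3 : |m - L| < δ/2 := hl₁ μ ν h1 h2
  have h4 : |a - L| < δ/2 := hl₁ μ μ h1 (le_refl μ)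
  have h5 : a - δ ≤ min a m := by
    rw [abs_lt] at h3 h4
    refine le_min (by linarith) (by linarith)
  have h6 : f a (tres f a m) = min a m := tdiv ht haI hmI
  have h7 : ψ (x μ) - ε ≤ f (tres f a m) (ψ (x μ)) :=
    hδ' a haI (tres f a m) (tres_mem ht haI hmI.1) (ψ (x μ)) (hψI _)
      (hψle _) (by rw [h6]; exact h5)
  exact le_trans h7 (hax (x μ) (x ν))

/-- weight-like functions converge along the net -/
lemma weight_conv (ht : IsContTNorm f) (hA : IsDCat f A)
    (hC : ∀ ε > (0:ℝ), ∃ l₀ : Λ, ∀ μ ν : Λ, l₀ ≤ μ → μ ≤ ν → |A (x μ) (x ν) - L| < ε)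
    {ω : α → ℝ} (hωI : ∀ u, ω u ∈ I01) (hωle : ∀ u, ω u ≤ A u u)
    (hax : ∀ u v, f (tres f (A v v) (ω v)) (A u v) ≤ ω u) :
    ∃ c ∈ I01, Tendsto (fun l => ω (x l)) atTop (nhds c) := by
  refine conv_of_almost_anti (fun l => hωI (x l)) ?_
  intro ε hε
  obtain ⟨δ, hδ, hδ'⟩ := tunif ht hε
  obtain ⟨l₁, hl₁⟩ := hC (δ/2) (by linarith)
  refine ⟨l₁, fun μ ν h1 h2 => ?_⟩
  set a := A (x ν) (x ν) with ha'
  have haI : a ∈ I01 := hA.1 _ _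
  set p := ω (x ν) with hp'
  have hpI : p ∈ I01 := hωI _
  have hpa : p ≤ a := hωle _
  set m := A (x μ) (x ν) with hm'
  have hmI : m ∈ I01 := hA.1 _ _
  have hma : m ≤ a := le_trans (hA.2.1 _ _) (min_le_right _ _)
  have h3 : |m - L| < δ/2 := hl₁ μ ν h1 h2
  have h4 : |a - L| < δ/2 := hl₁ ν ν (le_trans h1 h2) (le_refl ν)
  have h5 : a - δ ≤ min a m := by
    rw [abs_lt] at h3 h4
    refine le_min (by linarith) (by linarith)
  have h6 : f a (tres f a m) = min a m := tdiv ht haI hmI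
  have h7 : p - ε ≤ f (tres f a m) p :=
    hδ' a haI (tres f a m) (tres_mem ht haI hmI.1) p hpI hpa (by rw [h6]; exact h5)
  have h8 : f (tres f a p) m = f p (tres f a m) := tchain ht haI hpI hmI hpa hma
  have h9 : f p (tres f a m) = f (tres f a m) p :=
    tcomm ht hpI (tres_mem ht haI hmI.1)
  have := hax (x μ) (x ν)
  rw [← ha', ← hp', ← hm'] at this
  rw [h8, h9] at this
  linarith

/-- `A(u, x_σ)` converges to `genWeight A x u`. -/
lemma phi_tendsto (ht : IsContTNorm f) (hA : IsDCat f A)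
    (hC : ∀ ε > (0:ℝ), ∃ l₀ : Λ, ∀ μ ν : Λ, l₀ ≤ μ → μ ≤ ν → |A (x μ) (x ν) - L| < ε)
    (u : α) : Tendsto (fun σ => A u (x σ)) atTop (nhds (genWeight A x u)) := by
  obtain ⟨c, hcI, hct⟩ := coweight_conv ht hA hC (ψ := fun v => A u v)
    (fun v => hA.1 _ _) (fun v => le_trans (hA.2.1 _ _) (min_le_right _ _))
    (fun v w => hA.2.2 u v w)
  have : genWeight A x u = c :=
    liminf_eq_of_tendsto (fun l => hA.1 _ _) hct
  rw [this]; exact hct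

lemma phi_mem (hA : IsDCat f A) (u : α) :
    genWeight A x u ∈ I01 := by
  have h1 : ∀ l : Λ, A u (x l) ∈ I01 := fun l => hA.1 _ _
  have hinfbdd : ∀ l : Λ, BddBelow (Set.range (fun σ : {σ : Λ // l ≤ σ} => A u (x σ.1))) :=
    fun l => ⟨0, fun z ⟨σ, hσ⟩ => hσ ▸ (h1 σ.1).1⟩
  have hne : ∀ l : Λ, Nonempty {σ : Λ // l ≤ σ} := fun l => ⟨⟨l, le_refl l⟩⟩
  have hinfI : ∀ l : Λ, (⨅ σ : {σ : Λ // l ≤ σ}, A u (x σ.1)) ∈ I01 := by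
    intro l
    haveI := hne l
    exact ⟨le_ciInf (fun σ => (h1 σ.1).1),
      le_trans (ciInf_le (hinfbdd l) ⟨l, le_refl l⟩) (h1 l).2⟩
  have hsupbdd : BddAbove (Set.range (fun l : Λ => ⨅ σ : {σ : Λ // l ≤ σ}, A u (x σ.1))) :=
    ⟨1, fun z ⟨l, hl⟩ => hl ▸ (hinfI l).2⟩
  exact ⟨le_trans (hinfI (Classical.arbitrary Λ)).1 (le_ciSup hsupbdd _),
    ciSup_le (fun l => (hinfI l).2)⟩

lemma phi_le_diag (ht : IsContTNorm f) (hA : IsDCat f A)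
    (hC : ∀ ε > (0:ℝ), ∃ l₀ : Λ, ∀ μ ν : Λ, l₀ ≤ μ → μ ≤ ν → |A (x μ) (x ν) - L| < ε)
    (u : α) : genWeight A x u ≤ A u u :=
  le_of_tendsto (phi_tendsto ht hA hC u)
    (Filter.Eventually.of_forall (fun σ => le_trans (hA.2.1 _ _) (min_le_left _ _)))

lemma phi_le_L (ht : IsContTNorm f) (hA : IsDCat f A)
    (hC : ∀ ε > (0:ℝ), ∃ l₀ : Λ, ∀ μ ν : Λ, l₀ ≤ μ → μ ≤ ν → |A (x μ) (x ν) - L| < ε)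
    (u : α) : genWeight A x u ≤ L :=
  le_of_tendsto_of_tendsto' (phi_tendsto ht hA hC u) (diag_tendsto hC)
    (fun σ => le_trans (hA.2.1 _ _) (min_le_right _ _))

lemma genType_eq (hA : IsDCat f A)
    (hC : ∀ ε > (0:ℝ), ∃ l₀ : Λ, ∀ μ ν : Λ, l₀ ≤ μ → μ ≤ ν → |A (x μ) (x ν) - L| < ε) :
    genType A x = L :=
  liminf_eq_of_tendsto (fun l => hA.1 _ _) (diag_tendsto hC)

/-- `genWeight` along the diagonal tends to `L`. -/
lemma phi_diag_tendsto (ht : IsContTNorm f) (hA : IsDCat f A)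
    (hC : ∀ ε > (0:ℝ), ∃ l₀ : Λ, ∀ μ ν : Λ, l₀ ≤ μ → μ ≤ ν → |A (x μ) (x ν) - L| < ε) :
    Tendsto (fun l => genWeight A x (x l)) atTop (nhds L) := by
  rw [Metric.tendsto_atTop]
  intro ε hε
  obtain ⟨l₀, hl₀⟩ := hC (ε/2) (by linarith)
  refine ⟨l₀, fun σ hσ => ?_⟩
  have hub : genWeight A x (x σ) ≤ L := phi_le_L ht hA hC _
  have hlb : L - ε/2 ≤ genWeight A x (x σ) := by
    have h1 : L - ε/2 ≤ ⨅ τ : {τ : Λ // σ ≤ τ}, A (x σ) (x τ.1) := by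
      haveI : Nonempty {τ : Λ // σ ≤ τ} := ⟨⟨σ, le_refl σ⟩⟩
      refine le_ciInf (fun τ => ?_)
      have := hl₀ σ τ.1 hσ τ.2
      rw [abs_lt] at this
      linarith
    refine le_trans h1 ?_
    have hbdd : BddAbove (Set.range (fun l : Λ => ⨅ τ : {τ : Λ // l ≤ τ}, A (x σ) (x τ.1))) := by
      refine ⟨1, fun z ⟨l, hl⟩ => hl ▸ ?_⟩
      haveI : Nonempty {τ : Λ // l ≤ τ} := ⟨⟨l, le_refl l⟩⟩
      exact le_trans (ciInf_le ⟨0, fun w ⟨τ, hτ⟩ => hτ ▸ (hA.1 _ _).1⟩ ⟨l, le_refl l⟩)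
        (hA.1 _ _).2
    exact le_ciSup hbdd σ
  rw [Real.dist_eq, abs_lt]
  constructor <;> linarith

end Main

section Comp
variable {α : Type} {A : α → α → ℝ} {Λ : Type} [SemilatticeSup Λ] [Nonempty Λ]
  {x : Λ → α} {L : ℝ}

/-- main computation: composing the generated weight with a coweight gives the
limit of the coweight along the net. -/
lemma comp_eq_lim (ht : IsContTNorm f) (hA : IsDCat f A)
    (hC : ∀ ε > (0:ℝ), ∃ l₀ : Λ, ∀ μ ν : Λ, l₀ ≤ μ → μ ≤ ν → |A (x μ) (x ν) - L| < ε)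
    {ψ : α → ℝ} (hψI : ∀ u, ψ u ∈ I01) (hψle : ∀ u, ψ u ≤ A u u)
    (hax : ∀ u v, f (tres f (A u u) (A u v)) (ψ u) ≤ ψ v)
    {c : ℝ} (hct : Tendsto (fun l => ψ (x l)) atTop (nhds c)) :
    compWC f A (genWeight A x) ψ = c := by
  haveI : Nonempty α := ⟨x (Classical.arbitrary Λ)⟩
  have hLI : L ∈ I01 := L_mem hA hC
  have hcI : c ∈ I01 := isClosed_Icc.mem_of_tendsto hct
    (Filter.Eventually.of_forall (fun l => hψI (x l)))
  have hcL : c ≤ L := le_of_tendsto_of_tendsto' hct (diag_tendsto hC)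
    (fun l => hψle (x l))
  set φ := genWeight A x with hφ'
  have hφI : ∀ u, φ u ∈ I01 := fun u => phi_mem hA u
  have hφle : ∀ u, φ u ≤ A u u := fun u => phi_le_diag ht hA hC u
  have htermI : ∀ u, f (tres f (A u u) (φ u)) (ψ u) ∈ I01 := fun u =>
    tmem ht (tres_mem ht (hA.1 _ _) (hφI u).1) (hψI u)
  have hbdd : BddAbove (Set.range (fun u => f (tres f (A u u) (φ u)) (ψ u))) :=
    ⟨1, fun z ⟨u, hu⟩ => hu ▸ (htermI u).2⟩
  refine le_antisymm ?_ ?_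
  · -- each term is at most c
    refine ciSup_le (fun u => ?_)
    have haI : A u u ∈ I01 := hA.1 _ _
    have h1 : f (tres f (A u u) (φ u)) (ψ u) = f (φ u) (tres f (A u u) (ψ u)) :=
      tchain ht haI (hφI u) (hψI u) (hφle u) (hψle u)
    rw [h1]
    have h2 : ∀ σ : Λ, f (A u (x σ)) (tres f (A u u) (ψ u)) ≤ ψ (x σ) := by
      intro σ
      have hmI : A u (x σ) ∈ I01 := hA.1 _ _
      have hma : A u (x σ) ≤ A u u := le_trans (hA.2.1 _ _) (min_le_left _ _)
      have h3 : f (tres f (A u u) (A u (x σ))) (ψ u) = f (A u (x σ)) (tres f (A u u) (ψ u)) :=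
        tchain ht haI hmI (hψI u) hma (hψle u)
      rw [← h3]
      exact hax u (x σ)
    have h4 : Tendsto (fun σ => f (A u (x σ)) (tres f (A u u) (ψ u))) atTop
        (nhds (f (φ u) (tres f (A u u) (ψ u)))) :=
      ttendsto ht (phi_tendsto ht hA hC u) tendsto_const_nhds
        (fun σ => hA.1 _ _) (fun _ => tres_mem ht haI (hψI u).1)
        (hφI u) (tres_mem ht haI (hψI u).1)
    exact le_of_tendsto_of_tendsto' h4 hct h2
  · -- c is at most the supremum
    obtain ⟨ν, hν1, hν2, hν3⟩ := pick_seq (diag_tendsto hC) (phi_diag_tendsto ht hA hC) hct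
    set w : ℕ → ℝ := fun n => tres f (A (x (ν n)) (x (ν n))) (φ (x (ν n))) with hw'
    have hwI : ∀ n, w n ∈ I01 := fun n => tres_mem ht (hA.1 _ _) (hφI _).1
    obtain ⟨w₀, hw₀I, θ, hθ, hθt⟩ := isCompact_Icc.tendsto_subseq hwI
    have hθat : Tendsto θ atTop atTop := hθ.tendsto_atTop
    have hfLw : f L w₀ = L := by
      have h5 : ∀ n, f (A (x (ν (θ n))) (x (ν (θ n)))) (w (θ n)) =
          min (A (x (ν (θ n))) (x (ν (θ n)))) (φ (x (ν (θ n)))) := fun n =>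
        tdiv ht (hA.1 _ _) (hφI _)
      have h6 : Tendsto (fun n => f (A (x (ν (θ n))) (x (ν (θ n)))) (w (θ n))) atTop
          (nhds (f L w₀)) :=
        ttendsto ht (hν1.comp hθat) hθt (fun n => hA.1 _ _) (fun n => hwI _) hLI hw₀I
      have h7 : Tendsto (fun n => min (A (x (ν (θ n))) (x (ν (θ n)))) (φ (x (ν (θ n)))))
          atTop (nhds (min L L)) := (hν1.comp hθat).min (hν2.comp hθat)
      rw [min_self] at h7
      exact tendsto_nhds_unique (by simpa only [h5] using h6) h7
    have hfwc : f w₀ c = c := tunit_below ht hLI hw₀I hcI hfLw hcL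
    have h8 : Tendsto (fun n => f (w (θ n)) (ψ (x (ν (θ n))))) atTop (nhds (f w₀ c)) :=
      ttendsto ht hθt (hν3.comp hθat) (fun n => hwI _) (fun n => hψI _) hw₀I hcI
    have h9 : ∀ n, f (w (θ n)) (ψ (x (ν (θ n)))) ≤
        ⨆ u, f (tres f (A u u) (φ u)) (ψ u) := fun n => le_ciSup hbdd (x (ν (θ n)))
    have h10 : f w₀ c ≤ ⨆ u, f (tres f (A u u) (φ u)) (ψ u) :=
      le_of_tendsto_of_tendsto' h8 tendsto_const_nhds h9
    rw [hfwc] at h10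
    exact h10

end Comp

section Flat
variable {α : Type} {A : α → α → ℝ}

lemma part1 (ht : IsContTNorm f) (hA : IsDCat f A) :
    ∀ (Λ : Type) [SemilatticeSup Λ] [Nonempty Λ] (x : Λ → α), FwdCauchy A x →
      IsFlat f A (genType A x) (genWeight A x) := by
  intro Λ _ _ x hFC
  obtain ⟨L, hL⟩ := hFC
  have hC := cauchy_eps hL
  have hLI : L ∈ I01 := L_mem hA hC
  have hgt : genType A x = L := genType_eq hA hC
  intro b hb
  constructor
  · -- top coweight of type b
    set ψ : α → ℝ := fun u => min b (A u u) with hψ'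
    have hψI : ∀ u, ψ u ∈ I01 := fun u =>
      ⟨le_min hb.1 (hA.1 u u).1, le_trans (min_le_left _ _) hb.2⟩
    have hψle : ∀ u, ψ u ≤ A u u := fun u => min_le_right _ _
    have hax : ∀ u v, f (tres f (A u u) (A u v)) (ψ u) ≤ ψ v := by
      intro u v
      have haI : A u u ∈ I01 := hA.1 _ _
      have hmI : A u v ∈ I01 := hA.1 _ _
      have hrI : tres f (A u u) (A u v) ∈ I01 := tres_mem ht haI hmI.1
      refine le_min ?_ ?_
      · exact le_trans (tle_right ht hrI (hψI u)) (min_le_left _ _)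
      · calc f (tres f (A u u) (A u v)) (ψ u)
            ≤ f (tres f (A u u) (A u v)) (A u u) :=
              tmono2 ht hrI (hψI u) haI (hψle u)
        _ = f (A u u) (tres f (A u u) (A u v)) := tcomm ht hrI haI
        _ = min (A u u) (A u v) := tdiv ht haI hmI
        _ ≤ A u v := min_le_right _ _
        _ ≤ A v v := le_trans (hA.2.1 _ _) (min_le_right _ _)
    have hct : Tendsto (fun l => ψ (x l)) atTop (nhds (min b L)) := by
      have := (tendsto_const_nhds (x := b) (f := (atTop : Filter Λ))).min (diag_tendsto hC)
      simpa using this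
    have := comp_eq_lim ht hA hC hψI hψle hax hct
    rw [hgt]
    exact this
  · -- binary meets of coweights
    intro ψ₁ ψ₂ h₁ h₂
    have hI1 : ∀ u, ψ₁ u ∈ I01 := fun u =>
      ⟨(h₁.1 u).1, le_trans (le_trans (h₁.1 u).2 (min_le_right _ _)) (hA.1 u u).2⟩
    have hI2 : ∀ u, ψ₂ u ∈ I01 := fun u =>
      ⟨(h₂.1 u).1, le_trans (le_trans (h₂.1 u).2 (min_le_right _ _)) (hA.1 u u).2⟩
    have hle1 : ∀ u, ψ₁ u ≤ A u u := fun u => le_trans (h₁.1 u).2 (min_le_right _ _)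
    have hle2 : ∀ u, ψ₂ u ≤ A u u := fun u => le_trans (h₂.1 u).2 (min_le_right _ _)
    obtain ⟨c₁, hc₁I, hc₁t⟩ := coweight_conv ht hA hC hI1 hle1 h₁.2
    obtain ⟨c₂, hc₂I, hc₂t⟩ := coweight_conv ht hA hC hI2 hle2 h₂.2
    have he₁ := comp_eq_lim ht hA hC hI1 hle1 h₁.2 hc₁t
    have he₂ := comp_eq_lim ht hA hC hI2 hle2 h₂.2 hc₂t
    have hImin : ∀ u, min (ψ₁ u) (ψ₂ u) ∈ I01 := fun u =>
      ⟨le_min (hI1 u).1 (hI2 u).1, le_trans (min_le_left _ _) (hI1 u).2⟩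
    have hlemin : ∀ u, min (ψ₁ u) (ψ₂ u) ≤ A u u := fun u =>
      le_trans (min_le_left _ _) (hle1 u)
    have haxmin : ∀ u v, f (tres f (A u u) (A u v)) (min (ψ₁ u) (ψ₂ u)) ≤
        min (ψ₁ v) (ψ₂ v) := by
      intro u v
      have hrI : tres f (A u u) (A u v) ∈ I01 := tres_mem ht (hA.1 _ _) (hA.1 _ _).1
      refine le_min ?_ ?_
      · exact le_trans (tmono2 ht hrI (hImin u) (hI1 u) (min_le_left _ _)) (h₁.2 u v)
      · exact le_trans (tmono2 ht hrI (hImin u) (hI2 u) (min_le_right _ _)) (h₂.2 u v)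
    have hctmin : Tendsto (fun l => min (ψ₁ (x l)) (ψ₂ (x l))) atTop
        (nhds (min c₁ c₂)) := by
      have := hc₁t.min hc₂t
      simpa using this
    have hemin := comp_eq_lim ht hA hC hImin hlemin haxmin hctmin
    rw [he₁, he₂]
    exact hemin

end Flat

section Part2
variable {α : Type} {A : α → α → ℝ}

lemma part2 (ht : IsContTNorm f) (hA : IsDCat f A)
    (hcomp : ∀ (tφ : ℝ) (φ : α → ℝ), tφ ∈ Set.Icc (0:ℝ) 1 → IsWeight f A tφ φ →
        IsFlat f A tφ φ → ∃ s, IsSupremum f A tφ φ s) :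
    ∀ (Λ : Type) [SemilatticeSup Λ] [Nonempty Λ] (x : Λ → α), FwdCauchy A x →
      ∃ s, YonedaLim A x s := by
  intro Λ _ _ x hFC
  obtain ⟨L, hL⟩ := hFC
  have hC := cauchy_eps hL
  have hLI : L ∈ I01 := L_mem hA hC
  have hgt : genType A x = L := genType_eq hA hC
  haveI : Nonempty α := ⟨x (Classical.arbitrary Λ)⟩
  set φ := genWeight A x with hφ'
  have hφI : ∀ u, φ u ∈ I01 := fun u => phi_mem hA u
  have hφle : ∀ u, φ u ≤ A u u := fun u => phi_le_diag ht hA hC u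
  have hφL : ∀ u, φ u ≤ L := fun u => phi_le_L ht hA hC u
  have hW : IsWeight f A (genType A x) φ := by
    constructor
    · exact fun u => ⟨(hφI u).1, le_min (hgt ▸ hφL u) (hφle u)⟩
    · intro u v
      have haI : A v v ∈ I01 := hA.1 _ _
      have hmI : A u v ∈ I01 := hA.1 _ _
      have hma : A u v ≤ A v v := le_trans (hA.2.1 _ _) (min_le_right _ _)
      have h1 : f (tres f (A v v) (φ v)) (A u v) = f (φ v) (tres f (A v v) (A u v)) :=
        tchain ht haI (hφI v) hmI (hφle v) hma
      rw [h1]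
      have h2 : ∀ σ : Λ, f (A v (x σ)) (tres f (A v v) (A u v)) ≤ A u (x σ) := by
        intro σ
        have hpI : A v (x σ) ∈ I01 := hA.1 _ _
        have hpa : A v (x σ) ≤ A v v := le_trans (hA.2.1 _ _) (min_le_left _ _)
        have h3 : f (tres f (A v v) (A v (x σ))) (A u v) =
            f (A v (x σ)) (tres f (A v v) (A u v)) := tchain ht haI hpI hmI hpa hma
        rw [← h3]
        exact hA.2.2 u v (x σ)
      have h4 : Tendsto (fun σ => f (A v (x σ)) (tres f (A v v) (A u v))) atTop
          (nhds (f (φ v) (tres f (A v v) (A u v)))) :=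
        ttendsto ht (phi_tendsto ht hA hC v) tendsto_const_nhds
          (fun σ => hA.1 _ _) (fun _ => tres_mem ht haI hmI.1)
          (hφI v) (tres_mem ht haI hmI.1)
      exact le_of_tendsto_of_tendsto' h4 (phi_tendsto ht hA hC u) h2
  obtain ⟨s, hs⟩ := hcomp (genType A x) φ (hgt ▸ hLI) hW (part1 ht hA Λ x ⟨L, hL⟩)
  refine ⟨s, hs.1, fun y => ?_⟩
  -- the coweight A(−, y) converges along the net
  obtain ⟨cy, hcyI, hcyt⟩ := weight_conv ht hA hC (ω := fun v => A v y)
    (fun v => hA.1 _ _) (fun v => le_trans (hA.2.1 _ _) (min_le_left _ _))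
    (fun u v => hA.2.2 u v y)
  have hgen : genCoweight A x y = cy :=
    liminf_eq_of_tendsto (fun l => hA.1 _ _) hcyt
  have hcyL : cy ≤ L := le_of_tendsto_of_tendsto' hcyt (diag_tendsto hC)
    (fun l => le_trans (hA.2.1 _ _) (min_le_left _ _))
  have hcyAy : cy ≤ A y y := le_of_tendsto hcyt
    (Filter.Eventually.of_forall (fun l => le_trans (hA.2.1 _ _) (min_le_right _ _)))
  have hs2 := hs.2 y
  rw [hgt] at hs2
  have htermI : ∀ u, f (tres f (φ u) (A u y)) L ∈ I01 := fun u =>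
    tmem ht (tres_mem ht (hφI u) (hA.1 u y).1) hLI
  have hbddb : BddBelow (Set.range (fun u => f (tres f (φ u) (A u y)) L)) :=
    ⟨0, fun z ⟨u, hu⟩ => hu ▸ (htermI u).1⟩
  have hinf_ge : ∀ u, cy ≤ f (tres f (φ u) (A u y)) L := by
    intro u
    obtain ⟨ν, hν1, hν2, hν3⟩ := pick_seq (diag_tendsto hC) hcyt (phi_tendsto ht hA hC u)
    set w : ℕ → ℝ := fun n => tres f (A (x (ν n)) (x (ν n))) (A (x (ν n)) y) with hw'
    have hwI : ∀ n, w n ∈ I01 := fun n => tres_mem ht (hA.1 _ _) (hA.1 _ _).1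
    obtain ⟨w₀, hw₀I, θ, hθ, hθt⟩ := isCompact_Icc.tendsto_subseq hwI
    have hθat : Tendsto θ atTop atTop := hθ.tendsto_atTop
    have hfLw : f L w₀ = cy := by
      have h5 : ∀ n, f (A (x (ν (θ n))) (x (ν (θ n)))) (w (θ n)) = A (x (ν (θ n))) y := by
        intro n
        rw [tdiv ht (hA.1 _ _) (hA.1 _ _)]
        exact min_eq_right (le_trans (hA.2.1 _ _) (min_le_left _ _))
      have h6 : Tendsto (fun n => f (A (x (ν (θ n))) (x (ν (θ n)))) (w (θ n))) atTop
          (nhds (f L w₀)) :=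
        ttendsto ht (hν1.comp hθat) hθt (fun n => hA.1 _ _) (fun n => hwI _) hLI hw₀I
      have h7 : Tendsto (fun n => A (x (ν (θ n))) y) atTop (nhds cy) := hν2.comp hθat
      exact tendsto_nhds_unique (by simpa only [h5] using h6) h7
    have hfw₀φ : f w₀ (φ u) ≤ A u y := by
      have h8 : ∀ n, f (w (θ n)) (A u (x (ν (θ n)))) ≤ A u y := fun n =>
        hA.2.2 u (x (ν (θ n))) y
      have h9 : Tendsto (fun n => f (w (θ n)) (A u (x (ν (θ n))))) atTop
          (nhds (f w₀ (φ u))) :=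
        ttendsto ht hθt (hν3.comp hθat) (fun n => hwI _) (fun n => hA.1 _ _) hw₀I (hφI u)
      exact le_of_tendsto h9 (Filter.Eventually.of_forall h8)
    have hadj : w₀ ≤ tres f (φ u) (A u y) := by
      refine tres_adj ht hw₀I ?_
      rw [tcomm ht (hφI u) hw₀I]
      exact hfw₀φ
    calc cy = f L w₀ := hfLw.symm
    _ = f w₀ L := tcomm ht hLI hw₀I
    _ ≤ f (tres f (φ u) (A u y)) L :=
        tmono1 ht hw₀I (tres_mem ht (hφI u) (hA.1 u y).1) hLI hadj
  have hinf_le : (⨅ u, f (tres f (φ u) (A u y)) L) ≤ cy := by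
    obtain ⟨ν, hν1, hν2, _⟩ := pick_seq (phi_diag_tendsto ht hA hC) hcyt hcyt
    set q : ℕ → ℝ := fun n => tres f (φ (x (ν n))) (A (x (ν n)) y) with hq'
    have hqI : ∀ n, q n ∈ I01 := fun n => tres_mem ht (hφI _) (hA.1 _ _).1
    obtain ⟨q₀, hq₀I, θ, hθ, hθt⟩ := isCompact_Icc.tendsto_subseq hqI
    have hθat : Tendsto θ atTop atTop := hθ.tendsto_atTop
    have hfLq : f L q₀ = cy := by
      have h5 : ∀ n, f (φ (x (ν (θ n)))) (q (θ n)) =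
          min (φ (x (ν (θ n)))) (A (x (ν (θ n))) y) := fun n =>
        tdiv ht (hφI _) (hA.1 _ _)
      have h6 : Tendsto (fun n => f (φ (x (ν (θ n)))) (q (θ n))) atTop
          (nhds (f L q₀)) :=
        ttendsto ht (hν1.comp hθat) hθt (fun n => hφI _) (fun n => hqI _) hLI hq₀I
      have h7 : Tendsto (fun n => min (φ (x (ν (θ n)))) (A (x (ν (θ n))) y)) atTop
          (nhds (min L cy)) := by
        have := (hν1.comp hθat).min (hν2.comp hθat)
        simpa using this
      rw [min_eq_right hcyL] at h7
      exact tendsto_nhds_unique (by simpa only [h5] using h6) h7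
    have h10 : Tendsto (fun n => f (q (θ n)) L) atTop (nhds (f q₀ L)) :=
      ttendsto ht hθt tendsto_const_nhds (fun n => hqI _) (fun _ => hLI) hq₀I hLI
    have h11 : f q₀ L = cy := by rw [tcomm ht hq₀I hLI]; exact hfLq
    have h12 : ∀ n, (⨅ u, f (tres f (φ u) (A u y)) L) ≤ f (q (θ n)) L := fun n =>
      ciInf_le hbddb (x (ν (θ n)))
    have := le_of_tendsto_of_tendsto' (tendsto_const_nhds
      (x := ⨅ u, f (tres f (φ u) (A u y)) L) (f := (atTop : Filter ℕ))) h10 h12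
    rwa [h11] at this
  have hmin : min (A y y) (⨅ u, f (tres f (φ u) (A u y)) L) = cy :=
    le_antisymm (le_trans (min_le_right _ _) hinf_le)
      (le_min hcyAy (le_ciInf hinf_ge))
  rw [hs2, hgen]
  exact hmin

end Part2

end S12

/-- every weight generated by a forward Cauchy net is flat; consequently
every flat complete D(Q)-category is Yoneda complete. -/
theorem stmt12 (f : ℝ → ℝ → ℝ) (ht : IsContTNorm f)
    {α : Type} (A : α → α → ℝ) (hA : IsDCat f A) :
    (∀ (Λ : Type) [SemilatticeSup Λ] [Nonempty Λ] (x : Λ → α), FwdCauchy A x →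
      IsFlat f A (genType A x) (genWeight A x)) ∧
    ((∀ (tφ : ℝ) (φ : α → ℝ), tφ ∈ Set.Icc (0:ℝ) 1 → IsWeight f A tφ φ →
        IsFlat f A tφ φ → ∃ s, IsSupremum f A tφ φ s) →
      ∀ (Λ : Type) [SemilatticeSup Λ] [Nonempty Λ] (x : Λ → α), FwdCauchy A x →
        ∃ s, YonedaLim A x s) := by
  exact ⟨S12.part1 ht hA, fun hcomp => S12.part2 ht hA hcomp⟩
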